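/- Let M be a t×u matrix of sets of permutations (closed under pattern containment). For an admissible nonnegative integer matrix A of total weight n, the number of M-gridded permutations whose cell (k,ℓ) contains exactly A_{k,ℓ} entries equals ∏_{k=1}^t multinomial(Σ_ℓ A_{k,ℓ}; A_{k,1},…,A_{k,u}) · ∏_{ℓ=1}^u multinomial(Σ_k A_{k,ℓ}; A_{1,ℓ},…,A_{t,ℓ}) · ∏_{k,ℓ} |(M_{k,ℓ})_{A_{k,ℓ}}|, where |(M_{k,ℓ})_m| is the number of permutations of length m in M_{k,ℓ}. -/

import Mathlib

/-- `σ` (of length `m`) is the pattern of `π` on the set `S` of positions: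
there is a strictly increasing enumeration `e` of `S` by `Fin m` such that `σ`
is order isomorphic to the subsequence of `π` at the positions in `S`. -/
def IsPatternOn {m n : ℕ} (σ : Equiv.Perm (Fin m)) (π : Equiv.Perm (Fin n))
    (S : Finset (Fin n)) : Prop :=
  ∃ e : Fin m → Fin n, StrictMono e ∧ (∀ i, e i ∈ S) ∧ (∀ x ∈ S, ∃ i, e i = x) ∧
    ∀ i j, σ i < σ j ↔ π (e i) < π (e j)


open Finset

lemma strictMono_fin_eq_id {m : ℕ} {f : Fin m → Fin m} (hf : StrictMono f) : f = id := by
  have h : (Finset.univ : Finset (Fin m)).card = m := by simp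
  have h1 := Finset.orderEmbOfFin_unique h (f := f) (fun i => Finset.mem_univ _) hf
  have h2 := Finset.orderEmbOfFin_unique h (f := (id : Fin m → Fin m))
    (fun i => Finset.mem_univ _) strictMono_id
  rw [h1, h2]

lemma perm_eq_of_lt_iff {m : ℕ} {σ σ' : Equiv.Perm (Fin m)}
    (h : ∀ i j, σ i < σ j ↔ σ' i < σ' j) : σ = σ' := by
  have hsm : StrictMono (fun x => σ' (σ.symm x)) := by
    intro a b hab
    exact (h (σ.symm a) (σ.symm b)).1 (by simpa using hab)
  have h2 := strictMono_fin_eq_id hsm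
  apply Equiv.ext; intro i
  simpa using (congrFun h2 (σ i)).symm

lemma IsPatternOn.card_eq {m n : ℕ} {σ : Equiv.Perm (Fin m)} {π : Equiv.Perm (Fin n)}
    {S : Finset (Fin n)} (h : IsPatternOn σ π S) : S.card = m := by
  obtain ⟨e, hmono, hmem, hsurj, -⟩ := h
  have himg : Finset.univ.image e = S := by
    ext x
    simp only [Finset.mem_image, Finset.mem_univ, true_and]
    exact ⟨fun ⟨i, hi⟩ => hi ▸ hmem i, fun hx => hsurj x hx⟩
  rw [← himg, Finset.card_image_of_injective _ hmono.injective, Finset.card_univ,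
    Fintype.card_fin]

lemma pattern_mem_iff {n : ℕ} (W : ∀ m : ℕ, Set (Equiv.Perm (Fin m))) {m₀ : ℕ}
    (σ₀ : Equiv.Perm (Fin m₀)) (π : Equiv.Perm (Fin n)) (S : Finset (Fin n))
    (h₀ : IsPatternOn σ₀ π S) :
    (∃ (m : ℕ) (σ : Equiv.Perm (Fin m)), σ ∈ W m ∧ IsPatternOn σ π S) ↔ σ₀ ∈ W m₀ := by
  constructor
  · rintro ⟨m, σ, hσ, hp⟩
    have hc : S.card = m := hp.card_eq
    have hc₀ : S.card = m₀ := h₀.card_eq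
    obtain rfl : m = m₀ := hc.symm.trans hc₀
    obtain ⟨e, he1, he2, he3, he4⟩ := hp
    obtain ⟨e', f1, f2, f3, f4⟩ := h₀
    have hee : e = e' := by
      rw [Finset.orderEmbOfFin_unique hc₀ he2 he1, Finset.orderEmbOfFin_unique hc₀ f2 f1]
    subst hee
    have : σ = σ₀ := perm_eq_of_lt_iff (fun i j => (he4 i j).trans (f4 i j).symm)
    exact this ▸ hσ
  · intro h; exact ⟨m₀, σ₀, h, h₀⟩

section Band

variable {w n : ℕ} {b : Fin (w + 1) → ℕ}

lemma band_unique (hm : Monotone b) {v : ℕ} {ℓ ℓ' : Fin w}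
    (h : b ℓ.castSucc ≤ v ∧ v < b ℓ.succ) (h' : b ℓ'.castSucc ≤ v ∧ v < b ℓ'.succ) :
    ℓ = ℓ' := by
  rcases lt_trichotomy ℓ ℓ' with hlt | heq | hlt
  · exfalso
    have : ℓ.succ ≤ ℓ'.castSucc := by
      simp only [Fin.le_def, Fin.val_succ, Fin.coe_castSucc]
      exact hlt
    have := hm this
    omega
  · exact heq
  · exfalso
    have : ℓ'.succ ≤ ℓ.castSucc := by
      simp only [Fin.le_def, Fin.val_succ, Fin.coe_castSucc]
      exact hlt
    have := hm this
    omega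

lemma band_exists (hm : Monotone b) (h0 : b 0 = 0) (hl : b (Fin.last w) = n)
    {v : ℕ} (hv : v < n) : ∃ ℓ : Fin w, b ℓ.castSucc ≤ v ∧ v < b ℓ.succ := by
  have hw : 0 < w := by
    by_contra h
    have hw0 : w = 0 := by omega
    subst hw0
    have : (0 : Fin 1) = Fin.last 0 := rfl
    rw [this, hl] at h0
    omega
  set s : Finset (Fin w) := Finset.univ.filter (fun ℓ : Fin w => b ℓ.castSucc ≤ v) with hs
  have hne : s.Nonempty := by
    refine ⟨⟨0, hw⟩, ?_⟩
    simp only [hs, Finset.mem_filter, Finset.mem_univ, true_and]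
    have : (⟨0, hw⟩ : Fin w).castSucc = 0 := by ext; simp
    rw [this, h0]; omega
  set L := s.max' hne with hL
  have hmem : L ∈ s := s.max'_mem hne
  have hle : b L.castSucc ≤ v := by
    simpa only [hs, Finset.mem_filter, Finset.mem_univ, true_and] using hmem
  refine ⟨L, hle, ?_⟩
  by_contra hcon
  push_neg at hcon
  rcases Nat.lt_or_ge ((L : ℕ) + 1) w with hlt | hge
  · have hmem' : (⟨(L : ℕ) + 1, hlt⟩ : Fin w) ∈ s := by
      simp only [hs, Finset.mem_filter, Finset.mem_univ, true_and]
      have : (⟨(L : ℕ) + 1, hlt⟩ : Fin w).castSucc = L.succ := by ext; simp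
      rw [this]; exact hcon
    have := s.le_max' _ hmem'
    rw [← hL] at this
    simp only [Fin.le_def] at this
    omega
  · have hLw : (L : ℕ) + 1 = w := by have := L.isLt; omega
    have : L.succ = Fin.last w := by ext; simp [hLw]
    rw [this, hl] at hcon
    omega

noncomputable def bandIdx (hm : Monotone b) (h0 : b 0 = 0) (hl : b (Fin.last w) = n)
    {v : ℕ} (hv : v < n) : Fin w :=
  (band_exists hm h0 hl hv).choose

lemma bandIdx_spec (hm : Monotone b) (h0 : b 0 = 0) (hl : b (Fin.last w) = n)
    {v : ℕ} (hv : v < n) :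
    b (bandIdx hm h0 hl hv).castSucc ≤ v ∧ v < b (bandIdx hm h0 hl hv).succ :=
  (band_exists hm h0 hl hv).choose_spec

lemma bandIdx_eq_iff (hm : Monotone b) (h0 : b 0 = 0) (hl : b (Fin.last w) = n)
    {v : ℕ} (hv : v < n) (ℓ : Fin w) :
    bandIdx hm h0 hl hv = ℓ ↔ b ℓ.castSucc ≤ v ∧ v < b ℓ.succ := by
  constructor
  · rintro rfl; exact bandIdx_spec hm h0 hl hv
  · intro h; exact band_unique hm (bandIdx_spec hm h0 hl hv) h

end Band

set_option linter.unusedSectionVars false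
section FiberCount

variable {ι : Type*} [Fintype ι] [DecidableEq ι]

lemma sigma_mk_cast {c : ι → ℕ} {i j : ι} (h : i = j) (x : Fin (c i)) :
    (⟨j, Fin.cast (congrArg c h) x⟩ : Σ k, Fin (c k)) = ⟨i, x⟩ := by subst h; rfl

lemma sigma_pair_eq {N : ℕ} {c : ι → ℕ} {f : Fin N → ι}
    (e : ∀ i, {a : Fin N // f a = i} ≃ Fin (c i)) {i : ι} (a : Fin N) (ha : f a = i)
    (x : Fin (c i)) (hx : e i ⟨a, ha⟩ = x) :
    (⟨f a, e (f a) ⟨a, rfl⟩⟩ : Σ j, Fin (c j)) = ⟨i, x⟩ := by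
  subst ha; subst hx; rfl

lemma cast_apply_eq {N : ℕ} {c : ι → ℕ} {f : Fin N → ι}
    (e : ∀ i, {a : Fin N // f a = i} ≃ Fin (c i)) {i : ι} (a : Fin N) (ha : f a = i) :
    Fin.cast (congrArg c ha) (e (f a) ⟨a, rfl⟩) = e i ⟨a, ha⟩ := by
  subst ha; rfl

noncomputable def innerEquiv {N : ℕ} (c : ι → ℕ) (f : Fin N → ι) :
    {g : Fin N ≃ (Σ i, Fin (c i)) // ∀ a, (g a).1 = f a} ≃
      ∀ i, ({a : Fin N // f a = i} ≃ Fin (c i)) where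
  toFun g i :=
    { toFun := fun a => Fin.cast (congrArg c ((g.2 a.1).trans a.2)) (g.1 a.1).2
      invFun := fun x => ⟨g.1.symm ⟨i, x⟩, by rw [← g.2]; simp⟩
      left_inv := by
        rintro ⟨a, ha⟩
        apply Subtype.ext
        show g.1.symm _ = a
        have h : (g.1 a).1 = i := (g.2 a).trans ha
        have key : (⟨i, Fin.cast (congrArg c ((g.2 a).trans ha)) (g.1 a).2⟩ :
            Σ j, Fin (c j)) = g.1 a := sigma_mk_cast h (g.1 a).2
        rw [key]
        exact g.1.symm_apply_apply a
      right_inv := fun x => by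
        have h := g.1.apply_symm_apply ⟨i, x⟩
        have h2 : (((g.1 (g.1.symm ⟨i, x⟩)).2 :
            Fin (c (g.1 (g.1.symm ⟨i, x⟩)).1)) : ℕ) = (x : ℕ) :=
          congrArg (fun p : (Σ j, Fin (c j)) => (p.2 : ℕ)) h
        exact Fin.ext h2 }
  invFun e :=
    ⟨{ toFun := fun a => ⟨f a, e (f a) ⟨a, rfl⟩⟩
       invFun := fun p => ((e p.1).symm p.2).1
       left_inv := fun a => by simp
       right_inv := fun p => by
         obtain ⟨i, x⟩ := p
         exact sigma_pair_eq e _ ((e i).symm x).2 x ((e i).apply_symm_apply x) },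
     fun a => rfl⟩
  left_inv g := by
    apply Subtype.ext
    apply Equiv.ext
    intro a
    exact sigma_mk_cast (g.2 a) (g.1 a).2
  right_inv e := by
    funext i
    apply Equiv.ext
    rintro ⟨a, ha⟩
    exact cast_apply_eq e a ha

lemma card_fiber_functions {N : ℕ} (c : ι → ℕ) (hc : ∑ i, c i = N) :
    Nat.card {f : Fin N → ι // ∀ i, (Finset.univ.filter fun a => f a = i).card = c i} =
      Nat.multinomial Finset.univ c := by
  have hT : Fintype.card (Σ i, Fin (c i)) = N := by
    simp only [Fintype.card_sigma, Fintype.card_fin]; exact hc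
  have hfib : ∀ (g : Fin N ≃ (Σ i, Fin (c i))) (i : ι),
      (Finset.univ.filter fun a => (g a).1 = i).card = c i := by
    intro g i
    have e1 : {a : Fin N // (g a).1 = i} ≃ Fin (c i) :=
      innerEquiv c (fun a => (g a).1) ⟨g, fun a => rfl⟩ i
    rw [← Fintype.card_subtype, Fintype.card_congr e1, Fintype.card_fin]
  set q : (Fin N → ι) → Prop :=
    fun f => ∀ i, (Finset.univ.filter fun a => f a = i).card = c i with hq
  let ext : (Fin N ≃ (Σ i, Fin (c i))) → {f : Fin N → ι // q f} :=
    fun g => ⟨fun a => (g a).1, fun i => hfib g i⟩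
  have E2 : ∀ f : {f : Fin N → ι // q f},
      {g : Fin N ≃ (Σ i, Fin (c i)) // ext g = f} ≃
        ∀ i, ({a : Fin N // f.1 a = i} ≃ Fin (c i)) := by
    intro f
    refine (Equiv.subtypeEquivRight (fun g => ?_)).trans (innerEquiv c f.1)
    constructor
    · intro h a; rw [← h]
    · intro h; apply Subtype.ext; funext a; exact h a
  have h1 : Nat.card (Fin N ≃ (Σ i, Fin (c i))) = Nat.factorial N := by
    rw [Nat.card_eq_fintype_card,
      Fintype.card_equiv (Fintype.equivOfCardEq (by rw [Fintype.card_fin, hT])),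
      Fintype.card_fin]
  have h2 : Nat.card (Fin N ≃ (Σ i, Fin (c i))) =
      Nat.card {f : Fin N → ι // q f} * ∏ i, Nat.factorial (c i) := by
    rw [Nat.card_congr (Equiv.sigmaFiberEquiv ext).symm, Nat.card_eq_fintype_card,
      Fintype.card_sigma]
    have hconst : ∀ f : {f : Fin N → ι // q f},
        Fintype.card {g : Fin N ≃ (Σ i, Fin (c i)) // ext g = f} = ∏ i, Nat.factorial (c i) := by
      intro f
      rw [← Nat.card_eq_fintype_card, Nat.card_congr (E2 f), Nat.card_pi]
      refine Finset.prod_congr rfl fun i _ => ?_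
      have hcard : Fintype.card {a : Fin N // f.1 a = i} = c i := by
        rw [Fintype.card_subtype]; exact f.2 i
      rw [Nat.card_eq_fintype_card,
        Fintype.card_equiv (Fintype.equivOfCardEq (by rw [hcard, Fintype.card_fin])),
        hcard]
    rw [Finset.sum_congr rfl (fun f _ => hconst f), Finset.sum_const, Finset.card_univ,
      Nat.card_eq_fintype_card, smul_eq_mul]
  have h3 := Nat.multinomial_spec (Finset.univ : Finset ι) c
  rw [hc] at h3
  have hpos : 0 < ∏ i, Nat.factorial (c i) := Finset.prod_pos (fun i _ => Nat.factorial_pos _)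
  have hmain : Nat.card {f : Fin N → ι // q f} * ∏ i, Nat.factorial (c i) =
      Nat.multinomial Finset.univ c * ∏ i, Nat.factorial (c i) := by
    rw [← h2, h1, ← h3, mul_comm]
  exact Nat.eq_of_mul_eq_mul_right hpos hmain

end FiberCount

/-- The positions of `π` lying in the cell `(k, ℓ)` of the gridding determined by
the column divisions `col` and row divisions `row`. -/
def cellSet {t u n : ℕ} (col : Fin (t + 1) → ℕ) (row : Fin (u + 1) → ℕ)
    (π : Equiv.Perm (Fin n)) (k : Fin t) (ℓ : Fin u) : Finset (Fin n) :=
  Finset.univ.filter fun i : Fin n =>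
    col k.castSucc ≤ (i : ℕ) ∧ (i : ℕ) < col k.succ ∧
    row ℓ.castSucc ≤ (π i : ℕ) ∧ (π i : ℕ) < row ℓ.succ

/-- An `M`-gridding of the permutation `π` of length `n`: weakly increasing column
and row divisions such that the entries of `π` in each cell `(k, ℓ)` are order
isomorphic to a permutation in the class `M k ℓ`. -/
structure MGridding (t u n : ℕ)
    (M : Fin t → Fin u → ∀ m : ℕ, Set (Equiv.Perm (Fin m)))
    (π : Equiv.Perm (Fin n)) where
  col : Fin (t + 1) → ℕ
  row : Fin (u + 1) → ℕ
  colMono : Monotone col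
  rowMono : Monotone row
  colFirst : col 0 = 0
  colLast : col (Fin.last t) = n
  rowFirst : row 0 = 0
  rowLast : row (Fin.last u) = n
  cells : ∀ (k : Fin t) (ℓ : Fin u), ∃ (m : ℕ) (σ : Equiv.Perm (Fin m)),
    σ ∈ M k ℓ m ∧ IsPatternOn σ π (cellSet col row π k ℓ)

section PSum

def psum {t : ℕ} (f : Fin t → ℕ) : Fin (t + 1) → ℕ :=
  fun j => ∑ k : Fin t, if (k : ℕ) < (j : ℕ) then f k else 0

lemma psum_mono {t : ℕ} (f : Fin t → ℕ) : Monotone (psum f) := by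
  intro j j' h
  refine Finset.sum_le_sum fun k _ => ?_
  have h' : (j : ℕ) ≤ (j' : ℕ) := h
  split_ifs <;> omega

lemma psum_zero {t : ℕ} (f : Fin t → ℕ) : psum f 0 = 0 := by
  simp [psum]

lemma psum_last {t : ℕ} (f : Fin t → ℕ) : psum f (Fin.last t) = ∑ k, f k := by
  unfold psum
  refine Finset.sum_congr rfl fun k _ => ?_
  rw [if_pos]
  exact k.isLt

lemma psum_succ {t : ℕ} (f : Fin t → ℕ) (k : Fin t) :
    psum f k.succ = psum f k.castSucc + f k := by
  unfold psum
  have key : ∀ x : Fin t, (if (x : ℕ) < (k.succ : ℕ) then f x else 0) =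
      (if (x : ℕ) < (k.castSucc : ℕ) then f x else 0) + (if x = k then f x else 0) := by
    intro x
    simp only [Fin.val_succ, Fin.coe_castSucc, Fin.ext_iff]
    split_ifs <;> omega
  rw [Finset.sum_congr rfl (fun x _ => key x), Finset.sum_add_distrib,
    Finset.sum_ite_eq' Finset.univ k f, if_pos (Finset.mem_univ k)]

end PSum

lemma card_filter_range_perm {n a b : ℕ} (π : Equiv.Perm (Fin n)) (hb : b ≤ n) :
    (Finset.univ.filter fun i : Fin n => a ≤ (π i : ℕ) ∧ (π i : ℕ) < b).card = b - a := by
  refine (Finset.card_bij (fun i _ => (π i : ℕ)) ?_ ?_ ?_).trans (Nat.card_Ico a b)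
  · intro i hi
    simp only [Finset.mem_filter] at hi
    exact Finset.mem_Ico.2 ⟨hi.2.1, hi.2.2⟩
  · intro i hi j hj hij
    exact π.injective (Fin.ext hij)
  · intro x hx
    obtain ⟨h1, h2⟩ := Finset.mem_Ico.1 hx
    refine ⟨π.symm ⟨x, lt_of_lt_of_le h2 hb⟩, ?_, ?_⟩
    · simp only [Finset.mem_filter, Finset.mem_univ, true_and, Equiv.apply_symm_apply]
      exact ⟨h1, h2⟩
    · simp

lemma card_filter_range {n a b : ℕ} (hb : b ≤ n) :
    (Finset.univ.filter fun i : Fin n => a ≤ (i : ℕ) ∧ (i : ℕ) < b).card = b - a := by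
  convert card_filter_range_perm (a := a) (Equiv.refl (Fin n)) hb <;> rfl

section Uniq

variable {t u n : ℕ} {M : Fin t → Fin u → ∀ m : ℕ, Set (Equiv.Perm (Fin m))}
  {π : Equiv.Perm (Fin n)} (A : Matrix (Fin t) (Fin u) ℕ)

lemma col_step (G : MGridding t u n M π)
    (hcard : ∀ k ℓ, (cellSet G.col G.row π k ℓ).card = A k ℓ) (k : Fin t) :
    G.col k.succ = G.col k.castSucc + ∑ ℓ, A k ℓ := by
  have hb : G.col k.succ ≤ n := (G.colMono (Fin.le_last _)).trans_eq G.colLast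
  have hmono : G.col k.castSucc ≤ G.col k.succ := G.colMono (Fin.castSucc_le_succ k)
  have hstrip := card_filter_range (n := n) (a := G.col k.castSucc) (b := G.col k.succ) hb
  rw [Finset.card_eq_sum_card_fiberwise
    (f := fun i => bandIdx G.rowMono G.rowFirst G.rowLast (π i).isLt)
    (t := Finset.univ) (fun x _ => Finset.mem_univ _)] at hstrip
  have hcell : ∀ ℓ : Fin u,
      ((Finset.univ.filter fun i : Fin n => G.col k.castSucc ≤ (i : ℕ) ∧ (i : ℕ) < G.col k.succ).filter
        fun i => bandIdx G.rowMono G.rowFirst G.rowLast (π i).isLt = ℓ) =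
      cellSet G.col G.row π k ℓ := by
    intro ℓ
    ext i
    simp only [cellSet, Finset.mem_filter, Finset.mem_univ, true_and,
      bandIdx_eq_iff]
    tauto
  rw [Finset.sum_congr rfl (fun ℓ _ => by rw [hcell ℓ, hcard k ℓ])] at hstrip
  have h2 : G.col k.succ - G.col k.castSucc = ∑ ℓ, A k ℓ := hstrip.symm
  clear hstrip
  omega

lemma row_step (G : MGridding t u n M π)
    (hcard : ∀ k ℓ, (cellSet G.col G.row π k ℓ).card = A k ℓ) (ℓ : Fin u) :
    G.row ℓ.succ = G.row ℓ.castSucc + ∑ k, A k ℓ := by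
  have hb : G.row ℓ.succ ≤ n := (G.rowMono (Fin.le_last _)).trans_eq G.rowLast
  have hmono : G.row ℓ.castSucc ≤ G.row ℓ.succ := G.rowMono (Fin.castSucc_le_succ ℓ)
  have hstrip := card_filter_range_perm (a := G.row ℓ.castSucc) (b := G.row ℓ.succ) π hb
  rw [Finset.card_eq_sum_card_fiberwise
    (f := fun i => bandIdx G.colMono G.colFirst G.colLast i.isLt)
    (t := Finset.univ) (fun x _ => Finset.mem_univ _)] at hstrip
  have hcell : ∀ k : Fin t,
      ((Finset.univ.filter fun i : Fin n => G.row ℓ.castSucc ≤ (π i : ℕ) ∧ (π i : ℕ) < G.row ℓ.succ).filter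
        fun i => bandIdx G.colMono G.colFirst G.colLast i.isLt = k) =
      cellSet G.col G.row π k ℓ := by
    intro k
    ext i
    simp only [cellSet, Finset.mem_filter, Finset.mem_univ, true_and,
      bandIdx_eq_iff]
    tauto
  rw [Finset.sum_congr rfl (fun k _ => by rw [hcell k, hcard k ℓ])] at hstrip
  have h2 : G.row ℓ.succ - G.row ℓ.castSucc = ∑ k, A k ℓ := hstrip.symm
  clear hstrip
  omega

lemma col_eq (G : MGridding t u n M π)
    (hcard : ∀ k ℓ, (cellSet G.col G.row π k ℓ).card = A k ℓ) :
    G.col = psum (fun k => ∑ ℓ, A k ℓ) := by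
  funext j
  induction j using Fin.induction with
  | zero => rw [G.colFirst, psum_zero]
  | succ k ih => rw [col_step A G hcard k, psum_succ, ih]

lemma row_eq (G : MGridding t u n M π)
    (hcard : ∀ k ℓ, (cellSet G.col G.row π k ℓ).card = A k ℓ) :
    G.row = psum (fun ℓ => ∑ k, A k ℓ) := by
  funext j
  induction j using Fin.induction with
  | zero => rw [G.rowFirst, psum_zero]
  | succ ℓ ih => rw [row_step A G hcard ℓ, psum_succ, ih]

end Uniq

section Partition

variable {α : Type*} {ι : Type*}
  (P V : ι → Finset α)

noncomputable def pidx (hPcov : ∀ a, ∃ i, a ∈ P i) (a : α) : ι := (hPcov a).choose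

lemma pidx_mem (hPcov : ∀ a, ∃ i, a ∈ P i) (a : α) : a ∈ P (pidx P hPcov a) :=
  (hPcov a).choose_spec

lemma pidx_eq (hPuniq : ∀ a i j, a ∈ P i → a ∈ P j → i = j)
    (hPcov : ∀ a, ∃ i, a ∈ P i) {a : α} {i : ι} (h : a ∈ P i) :
    pidx P hPcov a = i :=
  hPuniq a _ i (pidx_mem P hPcov a) h

lemma apply_coe_congr (e : ∀ i, ({x // x ∈ P i} ≃ {y // y ∈ V i})) {i j : ι}
    (h : i = j) (a : α) (ha : a ∈ P i) (ha' : a ∈ P j) :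
    ((e i ⟨a, ha⟩ : {y // y ∈ V i}) : α) = ((e j ⟨a, ha'⟩ : {y // y ∈ V j}) : α) := by
  subst h; rfl

lemma symm_coe_congr (e : ∀ i, ({x // x ∈ P i} ≃ {y // y ∈ V i})) {i j : ι}
    (h : i = j) (b : α) (hb : b ∈ V i) (hb' : b ∈ V j) :
    (((e i).symm ⟨b, hb⟩ : {x // x ∈ P i}) : α) =
      (((e j).symm ⟨b, hb'⟩ : {x // x ∈ P j}) : α) := by
  subst h; rfl

noncomputable def permPartitionEquiv
    (hPuniq : ∀ a i j, a ∈ P i → a ∈ P j → i = j) (hPcov : ∀ a, ∃ i, a ∈ P i)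
    (hVuniq : ∀ a i j, a ∈ V i → a ∈ V j → i = j) (hVcov : ∀ a, ∃ i, a ∈ V i) :
    {π : Equiv.Perm α // ∀ i, ∀ a ∈ P i, π a ∈ V i} ≃
      ∀ i, ({x // x ∈ P i} ≃ {y // y ∈ V i}) where
  toFun π i :=
    { toFun := fun a => ⟨π.1 a.1, π.2 i a.1 a.2⟩
      invFun := fun b => ⟨π.1.symm b.1, by
        obtain ⟨j, hj⟩ := hPcov (π.1.symm b.1)
        have hv : π.1 (π.1.symm b.1) ∈ V j := π.2 j _ hj
        rw [Equiv.apply_symm_apply] at hv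
        obtain rfl := hVuniq b.1 i j b.2 hv
        exact hj⟩
      left_inv := fun a => Subtype.ext (π.1.symm_apply_apply a.1)
      right_inv := fun b => Subtype.ext (π.1.apply_symm_apply b.1) }
  invFun e :=
    ⟨{ toFun := fun a => (e (pidx P hPcov a) ⟨a, pidx_mem P hPcov a⟩ : α)
       invFun := fun b => (((e (pidx V hVcov b)).symm ⟨b, pidx_mem V hVcov b⟩ :
          {x // x ∈ P (pidx V hVcov b)}) : α)
       left_inv := by
         intro a
         set i := pidx P hPcov a with hi
         set b0 := e i ⟨a, pidx_mem P hPcov a⟩ with hb0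
         have hbV : (b0 : α) ∈ V i := b0.2
         have hvidx : pidx V hVcov (b0 : α) = i := pidx_eq V hVuniq hVcov hbV
         simp only
         rw [symm_coe_congr P V e hvidx (b0 : α) (pidx_mem V hVcov _) hbV]
         have : (⟨(b0 : α), hbV⟩ : {y // y ∈ V i}) = b0 := Subtype.ext rfl
         rw [this, hb0, Equiv.symm_apply_apply]
       right_inv := by
         intro b
         set i := pidx V hVcov b with hi
         set a0 := (e i).symm ⟨b, pidx_mem V hVcov b⟩ with ha0
         have haP : (a0 : α) ∈ P i := a0.2
         have hpidx : pidx P hPcov (a0 : α) = i := pidx_eq P hPuniq hPcov haP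
         simp only
         rw [apply_coe_congr P V e hpidx (a0 : α) (pidx_mem P hPcov _) haP]
         have : (⟨(a0 : α), haP⟩ : {x // x ∈ P i}) = a0 := Subtype.ext rfl
         rw [this, ha0, Equiv.apply_symm_apply] },
     by
       intro i a ha
       have hpidx : pidx P hPcov a = i := pidx_eq P hPuniq hPcov ha
       show (e (pidx P hPcov a) ⟨a, pidx_mem P hPcov a⟩ : α) ∈ V i
       rw [apply_coe_congr P V e hpidx a (pidx_mem P hPcov a) ha]
       exact (e i ⟨a, ha⟩).2⟩
  left_inv π := by
    apply Subtype.ext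
    apply Equiv.ext
    intro a
    rfl
  right_inv e := by
    funext i
    apply Equiv.ext
    rintro ⟨a, ha⟩
    apply Subtype.ext
    show (e (pidx P hPcov a) ⟨a, pidx_mem P hPcov a⟩ : α) = _
    exact apply_coe_congr P V e (pidx_eq P hPuniq hPcov ha) a (pidx_mem P hPcov a) ha

end Partition

section Conj

variable {n m : ℕ} {S T : Finset (Fin n)} (hS : S.card = m) (hT : T.card = m)

noncomputable def conjPermEquiv :
    ({x // x ∈ S} ≃ {y // y ∈ T}) ≃ Equiv.Perm (Fin m) :=
  Equiv.equivCongr (S.orderIsoOfFin hS).toEquiv.symm (T.orderIsoOfFin hT).toEquiv.symm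

lemma conjPermEquiv_apply (e : {x // x ∈ S} ≃ {y // y ∈ T}) (i : Fin m) :
    conjPermEquiv hS hT e i = (T.orderIsoOfFin hT).symm (e (S.orderIsoOfFin hS i)) :=
  rfl

lemma isPatternOn_conjPermEquiv (π : Equiv.Perm (Fin n))
    (e : {x // x ∈ S} ≃ {y // y ∈ T})
    (he : ∀ a : {x // x ∈ S}, ((e a : {y // y ∈ T}) : Fin n) = π a.1) :
    IsPatternOn (conjPermEquiv hS hT e) π S := by
  refine ⟨fun i => S.orderEmbOfFin hS i, (S.orderEmbOfFin hS).strictMono,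
    fun i => Finset.orderEmbOfFin_mem _ _ _, ?_, ?_⟩
  · intro x hx
    have : x ∈ Set.range (S.orderEmbOfFin hS) := by
      rw [Finset.range_orderEmbOfFin]; exact hx
    obtain ⟨i, hi⟩ := this
    exact ⟨i, hi⟩
  · intro i j
    rw [conjPermEquiv_apply, conjPermEquiv_apply]
    rw [(T.orderIsoOfFin hT).symm.lt_iff_lt]
    rw [← Subtype.coe_lt_coe]
    rw [he, he]
    have h1 : ∀ i : Fin m, ((S.orderIsoOfFin hS i : {x // x ∈ S}) : Fin n) =
        S.orderEmbOfFin hS i := fun i => Finset.coe_orderIsoOfFin_apply S hS i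
    rw [h1, h1]
end Conj

section Main

variable {t u n : ℕ} (A : Matrix (Fin t) (Fin u) ℕ)

def CC : Fin (t + 1) → ℕ := psum (fun k => ∑ ℓ, A k ℓ)
def RR : Fin (u + 1) → ℕ := psum (fun ℓ => ∑ k, A k ℓ)

lemma CC_succ (k : Fin t) : CC A k.succ = CC A k.castSucc + ∑ ℓ, A k ℓ := psum_succ _ k
lemma RR_succ (ℓ : Fin u) : RR A ℓ.succ = RR A ℓ.castSucc + ∑ k, A k ℓ := psum_succ _ ℓ

variable (hA : ∑ k, ∑ ℓ, A k ℓ = n)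
include hA

lemma CC_last : CC A (Fin.last t) = n := by rw [CC, psum_last]; exact hA

lemma RR_last : RR A (Fin.last u) = n := by
  rw [RR, psum_last, Finset.sum_comm]; exact hA

lemma CC_le (j : Fin (t + 1)) : CC A j ≤ n :=
  (psum_mono _ (Fin.le_last j)).trans_eq (CC_last A hA)

lemma RR_le (j : Fin (u + 1)) : RR A j ≤ n :=
  (psum_mono _ (Fin.le_last j)).trans_eq (RR_last A hA)

noncomputable def colIdx (i : Fin n) : Fin t :=
  bandIdx (b := CC A) (psum_mono _) (psum_zero _) (CC_last A hA) i.isLt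

noncomputable def rowIdx (v : Fin n) : Fin u :=
  bandIdx (b := RR A) (psum_mono _) (psum_zero _) (RR_last A hA) v.isLt

lemma colIdx_eq_iff (i : Fin n) (k : Fin t) :
    colIdx A hA i = k ↔ CC A k.castSucc ≤ (i : ℕ) ∧ (i : ℕ) < CC A k.succ :=
  bandIdx_eq_iff _ _ _ _ _

lemma rowIdx_eq_iff (v : Fin n) (ℓ : Fin u) :
    rowIdx A hA v = ℓ ↔ RR A ℓ.castSucc ≤ (v : ℕ) ∧ (v : ℕ) < RR A ℓ.succ :=
  bandIdx_eq_iff _ _ _ _ _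

def embC (k : Fin t) (j : Fin (∑ ℓ, A k ℓ)) : Fin n :=
  ⟨CC A k.castSucc + (j : ℕ), by
    have h1 := CC_le A hA k.succ
    have h2 := CC_succ A k
    omega⟩

def embR (ℓ : Fin u) (j : Fin (∑ k, A k ℓ)) : Fin n :=
  ⟨RR A ℓ.castSucc + (j : ℕ), by
    have h1 := RR_le A hA ℓ.succ
    have h2 := RR_succ A ℓ
    omega⟩

lemma embC_injective (k : Fin t) : Function.Injective (embC A hA k) := by
  intro a b h
  have := congrArg Fin.val h
  simp only [embC] at this
  exact Fin.ext (by omega)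

lemma embR_injective (ℓ : Fin u) : Function.Injective (embR A hA ℓ) := by
  intro a b h
  have := congrArg Fin.val h
  simp only [embR] at this
  exact Fin.ext (by omega)

lemma colIdx_embC (k : Fin t) (j : Fin (∑ ℓ, A k ℓ)) :
    colIdx A hA (embC A hA k j) = k := by
  rw [colIdx_eq_iff]
  have h2 := CC_succ A k
  have h3 := j.isLt
  simp only [embC]
  omega

lemma rowIdx_embR (ℓ : Fin u) (j : Fin (∑ k, A k ℓ)) :
    rowIdx A hA (embR A hA ℓ j) = ℓ := by
  rw [rowIdx_eq_iff]
  have h2 := RR_succ A ℓ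
  have h3 := j.isLt
  simp only [embR]
  omega

lemma exists_embC (i : Fin n) : ∃ j, embC A hA (colIdx A hA i) j = i := by
  have hspec := (colIdx_eq_iff A hA i (colIdx A hA i)).1 rfl
  have h2 := CC_succ A (colIdx A hA i)
  refine ⟨⟨(i : ℕ) - CC A (colIdx A hA i).castSucc, by omega⟩, ?_⟩
  simp only [embC]
  exact Fin.ext (by simp; omega)

lemma exists_embR (v : Fin n) : ∃ j, embR A hA (rowIdx A hA v) j = v := by
  have hspec := (rowIdx_eq_iff A hA v (rowIdx A hA v)).1 rfl
  have h2 := RR_succ A (rowIdx A hA v)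
  refine ⟨⟨(v : ℕ) - RR A (rowIdx A hA v).castSucc, by omega⟩, ?_⟩
  simp only [embR]
  exact Fin.ext (by simp; omega)

def Pset (f : ∀ k : Fin t, Fin (∑ ℓ, A k ℓ) → Fin u) (k : Fin t) (ℓ : Fin u) :
    Finset (Fin n) :=
  (Finset.univ.filter fun j => f k j = ℓ).image (embC A hA k)

def Vset (g : ∀ ℓ : Fin u, Fin (∑ k, A k ℓ) → Fin t) (k : Fin t) (ℓ : Fin u) :
    Finset (Fin n) :=
  (Finset.univ.filter fun j => g ℓ j = k).image (embR A hA ℓ)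

lemma mem_Pset {f : ∀ k : Fin t, Fin (∑ ℓ, A k ℓ) → Fin u} {k : Fin t} {ℓ : Fin u}
    {i : Fin n} : i ∈ Pset A hA f k ℓ ↔ ∃ j, f k j = ℓ ∧ embC A hA k j = i := by
  simp only [Pset, Finset.mem_image, Finset.mem_filter, Finset.mem_univ, true_and]

lemma mem_Vset {g : ∀ ℓ : Fin u, Fin (∑ k, A k ℓ) → Fin t} {k : Fin t} {ℓ : Fin u}
    {v : Fin n} : v ∈ Vset A hA g k ℓ ↔ ∃ j, g ℓ j = k ∧ embR A hA ℓ j = v := by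
  simp only [Vset, Finset.mem_image, Finset.mem_filter, Finset.mem_univ, true_and]

lemma colIdx_of_mem_Pset {f} {k : Fin t} {ℓ : Fin u} {i : Fin n}
    (h : i ∈ Pset A hA f k ℓ) : colIdx A hA i = k := by
  obtain ⟨j, -, rfl⟩ := (mem_Pset A hA).1 h
  exact colIdx_embC A hA k j

lemma rowIdx_of_mem_Vset {g} {k : Fin t} {ℓ : Fin u} {v : Fin n}
    (h : v ∈ Vset A hA g k ℓ) : rowIdx A hA v = ℓ := by
  obtain ⟨j, -, rfl⟩ := (mem_Vset A hA).1 h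
  exact rowIdx_embR A hA ℓ j

lemma Pset_uniq {f} {i : Fin n} {p q : Fin t × Fin u}
    (hp : i ∈ Pset A hA f p.1 p.2) (hq : i ∈ Pset A hA f q.1 q.2) : p = q := by
  obtain ⟨j, hj, hje⟩ := (mem_Pset A hA).1 hp
  obtain ⟨j', hj', hje'⟩ := (mem_Pset A hA).1 hq
  have hk : p.1 = q.1 := by
    rw [← colIdx_of_mem_Pset A hA hp, ← colIdx_of_mem_Pset A hA hq]
  obtain ⟨k1, l1⟩ := p
  obtain ⟨k2, l2⟩ := q
  simp only at hk ⊢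
  subst hk
  have : j = j' := embC_injective A hA k1 (hje.trans hje'.symm)
  subst this
  have hl : l1 = l2 := hj.symm.trans hj'
  subst hl
  rfl

lemma Vset_uniq {g} {v : Fin n} {p q : Fin t × Fin u}
    (hp : v ∈ Vset A hA g p.1 p.2) (hq : v ∈ Vset A hA g q.1 q.2) : p = q := by
  obtain ⟨j, hj, hje⟩ := (mem_Vset A hA).1 hp
  obtain ⟨j', hj', hje'⟩ := (mem_Vset A hA).1 hq
  have hl : p.2 = q.2 := by
    rw [← rowIdx_of_mem_Vset A hA hp, ← rowIdx_of_mem_Vset A hA hq]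
  obtain ⟨k1, l1⟩ := p
  obtain ⟨k2, l2⟩ := q
  simp only at hl ⊢
  subst hl
  have : j = j' := embR_injective A hA l1 (hje.trans hje'.symm)
  subst this
  have hk : k1 = k2 := hj.symm.trans hj'
  subst hk
  rfl

lemma Pset_cov (f) (i : Fin n) : ∃ p : Fin t × Fin u, i ∈ Pset A hA f p.1 p.2 := by
  obtain ⟨j, hj⟩ := exists_embC A hA i
  exact ⟨(colIdx A hA i, f (colIdx A hA i) j), (mem_Pset A hA).2 ⟨j, rfl, hj⟩⟩

lemma Vset_cov (g) (v : Fin n) : ∃ p : Fin t × Fin u, v ∈ Vset A hA g p.1 p.2 := by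
  obtain ⟨j, hj⟩ := exists_embR A hA v
  exact ⟨(g (rowIdx A hA v) j, rowIdx A hA v), (mem_Vset A hA).2 ⟨j, rfl, hj⟩⟩

lemma card_Pset {f} {k : Fin t}
    (hf : ∀ ℓ, (Finset.univ.filter fun j => f k j = ℓ).card = A k ℓ) (ℓ : Fin u) :
    (Pset A hA f k ℓ).card = A k ℓ := by
  rw [Pset, Finset.card_image_of_injective _ (embC_injective A hA k)]
  exact hf ℓ

lemma card_Vset {g} {ℓ : Fin u}
    (hg : ∀ k, (Finset.univ.filter fun j => g ℓ j = k).card = A k ℓ) (k : Fin t) :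
    (Vset A hA g k ℓ).card = A k ℓ := by
  rw [Vset, Finset.card_image_of_injective _ (embR_injective A hA ℓ)]
  exact hg k

lemma mem_cellSet_iff (π : Equiv.Perm (Fin n)) (k : Fin t) (ℓ : Fin u) (i : Fin n) :
    i ∈ cellSet (CC A) (RR A) π k ℓ ↔
      colIdx A hA i = k ∧ rowIdx A hA (π i) = ℓ := by
  simp only [cellSet, Finset.mem_filter, Finset.mem_univ, true_and,
    colIdx_eq_iff A hA, rowIdx_eq_iff A hA]
  tauto

lemma cellSet_eq_Pset_ext (π : Equiv.Perm (Fin n)) (k : Fin t) (ℓ : Fin u) :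
    cellSet (CC A) (RR A) π k ℓ =
      Pset A hA (fun k j => rowIdx A hA (π (embC A hA k j))) k ℓ := by
  ext i
  rw [mem_cellSet_iff A hA, mem_Pset]
  constructor
  · rintro ⟨hk, hl⟩
    subst hk
    obtain ⟨j, hj⟩ := exists_embC A hA i
    exact ⟨j, by rw [hj]; exact hl, hj⟩
  · rintro ⟨j, hj, rfl⟩
    exact ⟨colIdx_embC A hA k j, hj⟩

lemma cellSet_eq_image_extg (π : Equiv.Perm (Fin n)) (k : Fin t) (ℓ : Fin u) :
    cellSet (CC A) (RR A) π k ℓ =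
      (Finset.univ.filter fun j : Fin (∑ k', A k' ℓ) =>
          colIdx A hA (π.symm (embR A hA ℓ j)) = k).image
        (fun j => π.symm (embR A hA ℓ j)) := by
  ext i
  rw [mem_cellSet_iff A hA]
  simp only [Finset.mem_image, Finset.mem_filter, Finset.mem_univ, true_and]
  constructor
  · rintro ⟨hk, hl⟩
    subst hl
    obtain ⟨j, hj⟩ := exists_embR A hA (π i)
    refine ⟨j, ?_, ?_⟩
    · rw [hj, Equiv.symm_apply_apply]; exact hk
    · rw [hj, Equiv.symm_apply_apply]
  · rintro ⟨j, hj, rfl⟩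
    refine ⟨hj, ?_⟩
    rw [Equiv.apply_symm_apply]
    exact rowIdx_embR A hA ℓ j

end Main

lemma MGridding.ext' {t u n : ℕ} {M : Fin t → Fin u → ∀ m : ℕ, Set (Equiv.Perm (Fin m))}
    {π : Equiv.Perm (Fin n)} {g g' : MGridding t u n M π}
    (h1 : g.col = g'.col) (h2 : g.row = g'.row) : g = g' := by
  cases g; cases g'
  dsimp at h1 h2
  subst h1; subst h2
  rfl

lemma nat_card_sigma' {ι : Type*} [Fintype ι] {β : ι → Type*} [∀ i, Finite (β i)] :
    Nat.card (Σ i, β i) = ∑ i, Nat.card (β i) := by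
  classical
  letI : ∀ i, Fintype (β i) := fun i => Fintype.ofFinite _
  rw [Nat.card_eq_fintype_card, Fintype.card_sigma]
  exact Finset.sum_congr rfl fun i _ => Nat.card_eq_fintype_card.symm

section Assembly

variable {t u n : ℕ} (M : Fin t → Fin u → ∀ m : ℕ, Set (Equiv.Perm (Fin m)))
  (A : Matrix (Fin t) (Fin u) ℕ)

def TCond (π : Equiv.Perm (Fin n)) : Prop :=
  (∀ (k : Fin t) (ℓ : Fin u), (cellSet (CC A) (RR A) π k ℓ).card = A k ℓ) ∧
  (∀ (k : Fin t) (ℓ : Fin u), ∃ (m : ℕ) (σ : Equiv.Perm (Fin m)),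
     σ ∈ M k ℓ m ∧ IsPatternOn σ π (cellSet (CC A) (RR A) π k ℓ))

def FType : Type :=
  ∀ k : Fin t, {f : Fin (∑ ℓ, A k ℓ) → Fin u //
    ∀ ℓ, (Finset.univ.filter fun j => f j = ℓ).card = A k ℓ}

def GType : Type :=
  ∀ ℓ : Fin u, {g : Fin (∑ k, A k ℓ) → Fin t //
    ∀ k, (Finset.univ.filter fun j => g j = k).card = A k ℓ}

instance : Fintype (FType A) := by unfold FType; infer_instance
instance : Fintype (GType A) := by unfold GType; infer_instance

variable (hA : ∑ k, ∑ ℓ, A k ℓ = n)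

def Cond (fg : FType A × GType A) (π : Equiv.Perm (Fin n)) : Prop :=
  (∀ p : Fin t × Fin u, ∀ a ∈ Pset A hA (fun k => (fg.1 k).1) p.1 p.2,
      π a ∈ Vset A hA (fun ℓ => (fg.2 ℓ).1) p.1 p.2) ∧
  (∀ p : Fin t × Fin u, ∃ (m : ℕ) (σ : Equiv.Perm (Fin m)),
      σ ∈ M p.1 p.2 m ∧ IsPatternOn σ π (Pset A hA (fun k => (fg.1 k).1) p.1 p.2))

include hA in
lemma extract_f_card {π : Equiv.Perm (Fin n)} (hT : TCond M A π) (k : Fin t) (ℓ : Fin u) :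
    (Finset.univ.filter fun j => rowIdx A hA (π (embC A hA k j)) = ℓ).card = A k ℓ := by
  have h1 := hT.1 k ℓ
  rw [cellSet_eq_Pset_ext A hA, Pset,
    Finset.card_image_of_injective _ (embC_injective A hA k)] at h1
  exact h1

include hA in
lemma extract_g_card {π : Equiv.Perm (Fin n)} (hT : TCond M A π) (k : Fin t) (ℓ : Fin u) :
    (Finset.univ.filter fun j => colIdx A hA (π.symm (embR A hA ℓ j)) = k).card = A k ℓ := by
  have h1 := hT.1 k ℓ
  have hinj : Function.Injective (fun j => π.symm (embR A hA ℓ j)) :=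
    fun a b h => embR_injective A hA ℓ (π.symm.injective h)
  rw [cellSet_eq_image_extg A hA, Finset.card_image_of_injective _ hinj] at h1
  exact h1

noncomputable def extract (x : {π : Equiv.Perm (Fin n) // TCond M A π}) :
    FType A × GType A :=
  ⟨fun k => ⟨fun j => rowIdx A hA (x.1 (embC A hA k j)),
      fun ℓ => extract_f_card M A hA x.2 k ℓ⟩,
   fun ℓ => ⟨fun j => colIdx A hA (x.1.symm (embR A hA ℓ j)),
      fun k => extract_g_card M A hA x.2 k ℓ⟩⟩

include hA in
lemma cellSet_eq_Pset_of_map {π : Equiv.Perm (Fin n)}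
    {f : ∀ k : Fin t, Fin (∑ ℓ, A k ℓ) → Fin u}
    {g : ∀ ℓ : Fin u, Fin (∑ k, A k ℓ) → Fin t}
    (hmap : ∀ p : Fin t × Fin u, ∀ a ∈ Pset A hA f p.1 p.2, π a ∈ Vset A hA g p.1 p.2)
    (k : Fin t) (ℓ : Fin u) :
    cellSet (CC A) (RR A) π k ℓ = Pset A hA f k ℓ := by
  ext i
  rw [mem_cellSet_iff A hA]
  constructor
  · rintro ⟨hk, hl⟩
    obtain ⟨p, hp⟩ := Pset_cov A hA f i
    have hk' : p.1 = k := (colIdx_of_mem_Pset A hA hp).symm.trans hk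
    have hv := hmap p i hp
    have hl' : p.2 = ℓ := (rowIdx_of_mem_Vset A hA hv).symm.trans hl
    rw [← hk', ← hl']
    exact hp
  · intro hp
    exact ⟨colIdx_of_mem_Pset A hA hp,
      rowIdx_of_mem_Vset A hA (hmap (k, ℓ) i hp)⟩

include hA in
lemma cond_tcond {fg : FType A × GType A} {π : Equiv.Perm (Fin n)}
    (hC : Cond M A hA fg π) : TCond M A π := by
  constructor
  · intro k ℓ
    rw [cellSet_eq_Pset_of_map A hA hC.1 k ℓ]
    exact card_Pset A hA (fg.1 k).2 ℓ
  · intro k ℓ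
    rw [cellSet_eq_Pset_of_map A hA hC.1 k ℓ]
    exact hC.2 (k, ℓ)

include hA in
lemma cond_extract {fg : FType A × GType A} {π : Equiv.Perm (Fin n)}
    (hC : Cond M A hA fg π) (hT : TCond M A π) :
    extract M A hA ⟨π, hT⟩ = fg := by
  have hmap := hC.1
  refine Prod.ext ?_ ?_
  · funext k
    apply Subtype.ext
    funext j
    show rowIdx A hA (π (embC A hA k j)) = (fg.1 k).1 j
    have hmem : embC A hA k j ∈ Pset A hA (fun k => (fg.1 k).1) k ((fg.1 k).1 j) :=
      (mem_Pset A hA).2 ⟨j, rfl, rfl⟩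
    exact rowIdx_of_mem_Vset A hA (hmap (k, (fg.1 k).1 j) _ hmem)
  · funext ℓ
    apply Subtype.ext
    funext j
    show colIdx A hA (π.symm (embR A hA ℓ j)) = (fg.2 ℓ).1 j
    have hbV : embR A hA ℓ j ∈ Vset A hA (fun ℓ => (fg.2 ℓ).1) ((fg.2 ℓ).1 j) ℓ :=
      (mem_Vset A hA).2 ⟨j, rfl, rfl⟩
    obtain ⟨p, hp⟩ := Pset_cov A hA (fun k => (fg.1 k).1) (π.symm (embR A hA ℓ j))
    have hv := hmap p _ hp
    rw [Equiv.apply_symm_apply] at hv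
    have hpq : p = ((fg.2 ℓ).1 j, ℓ) := Vset_uniq A hA hv hbV
    have hcol := colIdx_of_mem_Pset A hA hp
    rw [hpq] at hcol
    exact hcol

include hA in
lemma tcond_extract_cond {fg : FType A × GType A} {π : Equiv.Perm (Fin n)}
    (hT : TCond M A π) (hex : extract M A hA ⟨π, hT⟩ = fg) :
    Cond M A hA fg π := by
  have hf : ∀ k, (fg.1 k).1 = fun j => rowIdx A hA (π (embC A hA k j)) := by
    rw [← hex]; intro k; rfl
  have hg : ∀ ℓ, (fg.2 ℓ).1 = fun j => colIdx A hA (π.symm (embR A hA ℓ j)) := by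
    rw [← hex]; intro ℓ; rfl
  have hPeq : (fun k => (fg.1 k).1) = (fun k j => rowIdx A hA (π (embC A hA k j))) :=
    funext hf
  have hcell : ∀ k ℓ, cellSet (CC A) (RR A) π k ℓ =
      Pset A hA (fun k => (fg.1 k).1) k ℓ := by
    intro k ℓ
    rw [hPeq]
    exact cellSet_eq_Pset_ext A hA π k ℓ
  constructor
  · rintro ⟨k, ℓ⟩ a ha
    rw [← hcell, mem_cellSet_iff A hA] at ha
    obtain ⟨hk, hl⟩ := ha
    subst hl
    obtain ⟨j, hj⟩ := exists_embR A hA (π a)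
    rw [mem_Vset A hA]
    refine ⟨j, ?_, hj⟩
    rw [hg]
    show colIdx A hA (π.symm (embR A hA (rowIdx A hA (π a)) j)) = _
    rw [hj, Equiv.symm_apply_apply]
    exact hk
  · rintro ⟨k, ℓ⟩
    rw [← hcell]
    exact hT.2 k ℓ

end Assembly

section Final

variable {t u n : ℕ} (M : Fin t → Fin u → ∀ m : ℕ, Set (Equiv.Perm (Fin m)))
  (A : Matrix (Fin t) (Fin u) ℕ) (hA : ∑ k, ∑ ℓ, A k ℓ = n)

noncomputable def fiberEquiv (fg : FType A × GType A) :
    {x : {π : Equiv.Perm (Fin n) // TCond M A π} // extract M A hA x = fg} ≃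
      {π : Equiv.Perm (Fin n) // Cond M A hA fg π} where
  toFun x := ⟨x.1.1, tcond_extract_cond M A hA x.1.2 x.2⟩
  invFun y := ⟨⟨y.1, cond_tcond M A hA y.2⟩, cond_extract M A hA y.2 _⟩
  left_inv x := Subtype.ext (Subtype.ext rfl)
  right_inv y := Subtype.ext rfl

noncomputable def condEquiv (fg : FType A × GType A) :
    {π : Equiv.Perm (Fin n) // Cond M A hA fg π} ≃
      ∀ p : Fin t × Fin u, {σ : Equiv.Perm (Fin (A p.1 p.2)) // σ ∈ M p.1 p.2 (A p.1 p.2)} :=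
  let f1 := fun k => (fg.1 k).1
  let g1 := fun ℓ => (fg.2 ℓ).1
  let P := fun p : Fin t × Fin u => Pset A hA f1 p.1 p.2
  let V := fun p : Fin t × Fin u => Vset A hA g1 p.1 p.2
  let hSp : ∀ p : Fin t × Fin u, (P p).card = A p.1 p.2 :=
    fun p => card_Pset A hA (fg.1 p.1).2 p.2
  let hTp : ∀ p : Fin t × Fin u, (V p).card = A p.1 p.2 :=
    fun p => card_Vset A hA (fg.2 p.2).2 p.1
  let Φ := permPartitionEquiv P V
    (fun a i j hi hj => Pset_uniq A hA hi hj)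
    (fun a => Pset_cov A hA f1 a)
    (fun a i j hi hj => Vset_uniq A hA hi hj)
    (fun a => Vset_cov A hA g1 a)
  ((Equiv.subtypeSubtypeEquivSubtypeInter
      (fun π : Equiv.Perm (Fin n) => ∀ p, ∀ a ∈ P p, π a ∈ V p)
      (fun π => ∀ p : Fin t × Fin u, ∃ (m : ℕ) (σ : Equiv.Perm (Fin m)),
        σ ∈ M p.1 p.2 m ∧ IsPatternOn σ π (P p))).symm.trans
    ((Equiv.subtypeEquiv Φ (fun x => forall_congr' (fun p =>
        pattern_mem_iff (M p.1 p.2) (conjPermEquiv (hSp p) (hTp p) (Φ x p)) x.1 (P p)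
          (isPatternOn_conjPermEquiv (hSp p) (hTp p) x.1 (Φ x p) (fun a => rfl))))).trans
      (Equiv.subtypePiEquivPi.trans
        (Equiv.piCongrRight (fun p =>
          Equiv.subtypeEquiv (conjPermEquiv (hSp p) (hTp p)) (fun e => Iff.rfl))))))

noncomputable def SEquiv :
    {g : (π : Equiv.Perm (Fin n)) × MGridding t u n M π //
        ∀ (k : Fin t) (ℓ : Fin u), (cellSet g.2.col g.2.row g.1 k ℓ).card = A k ℓ} ≃
      {π : Equiv.Perm (Fin n) // TCond M A π} where
  toFun x := ⟨x.1.1, by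
    have hcol : x.1.2.col = CC A := col_eq A x.1.2 x.2
    have hrow : x.1.2.row = RR A := row_eq A x.1.2 x.2
    constructor
    · intro k ℓ; rw [← hcol, ← hrow]; exact x.2 k ℓ
    · intro k ℓ; rw [← hcol, ← hrow]; exact x.1.2.cells k ℓ⟩
  invFun y := ⟨⟨y.1,
    { col := CC A, row := RR A
      colMono := psum_mono _, rowMono := psum_mono _
      colFirst := psum_zero _, colLast := CC_last A hA
      rowFirst := psum_zero _, rowLast := RR_last A hA
      cells := y.2.2 }⟩, y.2.1⟩
  left_inv x := by
    obtain ⟨⟨π, G⟩, hx⟩ := x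
    apply Subtype.ext
    show (⟨π, _⟩ : (π : Equiv.Perm (Fin n)) × MGridding t u n M π) = ⟨π, G⟩
    exact congrArg (Sigma.mk π) (MGridding.ext' (col_eq A G hx).symm (row_eq A G hx).symm)
  right_inv y := Subtype.ext rfl

end Final

/-- Proposition 1: for an admissible nonnegative integer matrix `A` of weight `n`,
the number of `M`-gridded permutations whose cell `(k,ℓ)` contains exactly
`A k ℓ` entries is
`∏_k multinomial(A k,·) · ∏_ℓ multinomial(A ·,ℓ) · ∏_{k,ℓ} |(M k ℓ)_{A k ℓ}|`. -/
theorem count_gridded_with_cell_counts (t u n : ℕ)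
    (M : Fin t → Fin u → ∀ m : ℕ, Set (Equiv.Perm (Fin m)))
    (hM : ∀ (k : Fin t) (ℓ : Fin u) {m n' : ℕ} (σ : Equiv.Perm (Fin m))
      (π : Equiv.Perm (Fin n')) (S : Finset (Fin n')),
      π ∈ M k ℓ n' → IsPatternOn σ π S → σ ∈ M k ℓ m)
    (A : Matrix (Fin t) (Fin u) ℕ)
    (hA : ∑ k, ∑ ℓ, A k ℓ = n)
    (hAdm : ∀ (k : Fin t) (ℓ : Fin u),
      (∀ (m : ℕ) (σ : Equiv.Perm (Fin m)), σ ∉ M k ℓ m) → A k ℓ = 0) :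
    Nat.card {g : (π : Equiv.Perm (Fin n)) × MGridding t u n M π //
        ∀ (k : Fin t) (ℓ : Fin u), (cellSet g.2.col g.2.row g.1 k ℓ).card = A k ℓ} =
      (∏ k, Nat.multinomial Finset.univ (fun ℓ => A k ℓ)) *
        (∏ ℓ, Nat.multinomial Finset.univ (fun k => A k ℓ)) *
        ∏ k, ∏ ℓ, Nat.card {σ : Equiv.Perm (Fin (A k ℓ)) // σ ∈ M k ℓ (A k ℓ)} := by
  rw [Nat.card_congr (SEquiv M A hA)]
  rw [Nat.card_congr (Equiv.sigmaFiberEquiv (extract M A hA)).symm]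
  rw [nat_card_sigma']
  have hfib : ∀ fg : FType A × GType A,
      Nat.card {x : {π : Equiv.Perm (Fin n) // TCond M A π} // extract M A hA x = fg} =
        ∏ p : Fin t × Fin u,
          Nat.card {σ : Equiv.Perm (Fin (A p.1 p.2)) // σ ∈ M p.1 p.2 (A p.1 p.2)} := by
    intro fg
    rw [Nat.card_congr ((fiberEquiv M A hA fg).trans (condEquiv M A hA fg)), Nat.card_pi]
  rw [Finset.sum_congr rfl (fun fg _ => hfib fg), Finset.sum_const, Finset.card_univ,
    smul_eq_mul]
  have hF : Fintype.card (FType A × GType A) =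
      (∏ k, Nat.multinomial Finset.univ (fun ℓ => A k ℓ)) *
      (∏ ℓ, Nat.multinomial Finset.univ (fun k => A k ℓ)) := by
    rw [Fintype.card_prod]
    congr 1
    · rw [← Nat.card_eq_fintype_card]
      show Nat.card (∀ k : Fin t, {f : Fin (∑ ℓ, A k ℓ) → Fin u //
        ∀ ℓ, (Finset.univ.filter fun j => f j = ℓ).card = A k ℓ}) = _
      rw [Nat.card_pi]
      exact Finset.prod_congr rfl fun k _ => card_fiber_functions (fun ℓ => A k ℓ) rfl
    · rw [← Nat.card_eq_fintype_card]
      show Nat.card (∀ ℓ : Fin u, {g : Fin (∑ k, A k ℓ) → Fin t //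
        ∀ k, (Finset.univ.filter fun j => g j = k).card = A k ℓ}) = _
      rw [Nat.card_pi]
      exact Finset.prod_congr rfl fun ℓ _ => card_fiber_functions (fun k => A k ℓ) rfl
  rw [hF, Fintype.prod_prod_type]
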